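/- (Strict Monotonicity for Interior Solutions) Under the setting of the Structural Shift theorem — with 𝓜(α; ζ) = B₀ n^{−2β} α^{−2β} + Σ_{c=1}^{M} ζ_c H_c(α), H_c(α) = (α^c/c!) ∏_{j=0}^{c−1}(αn − j), and ζ⁽²⁾ dominating ζ⁽¹⁾ in the high-order sense (equal below c*, ≥ at or above c*, strictly greater for at least one c ≥ c*) — if α*₁ minimizes 𝓜(·; ζ⁽¹⁾) over [M/n, 1], α*₂ minimizes 𝓜(·; ζ⁽²⁾) over [M/n, 1], and both minimizers lie in the open interval (M/n, 1), then the inequality is strict: α*₂ < α*₁. -/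

import Mathlib

/-- The continuous extension `H_c(α) = (α^c/c!) ∏_{j=0}^{c−1} (αn − j)` of the `c`-th
order variance inflation multiplier of subagging. -/
noncomputable def Hmul (n c : ℕ) (α : ℝ) : ℝ :=
  α ^ c / (Nat.factorial c : ℝ) * ∏ j ∈ Finset.range c, (α * n - j)

/-- The continuous finite-sample MSE envelope
`𝓜(α; ζ) = B₀ n^{−2β} α^{−2β} + Σ_{c=1}^{M} ζ_c H_c(α)`. -/
noncomputable def Menv (n M : ℕ) (B₀ β : ℝ) (ζ : ℕ → ℝ) (α : ℝ) : ℝ :=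
  B₀ * (n : ℝ) ^ (-(2 * β)) * α ^ (-(2 * β)) + ∑ c ∈ Finset.Icc 1 M, ζ c * Hmul n c α

/-- Derivative of `Hmul n c`. -/
noncomputable def Hder (n c : ℕ) (α : ℝ) : ℝ :=
  (c : ℝ) * α ^ (c - 1) / (Nat.factorial c : ℝ) * ∏ j ∈ Finset.range c, (α * n - j)
  + α ^ c / (Nat.factorial c : ℝ) *
      ∑ j ∈ Finset.range c, (∏ k ∈ (Finset.range c).erase j, (α * n - k)) * n

lemma hasDerivAt_Hmul (n c : ℕ) (α : ℝ) : HasDerivAt (Hmul n c) (Hder n c α) α := by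
  have hp : HasDerivAt (fun x : ℝ => ∏ j ∈ Finset.range c, (x * n - j))
      (∑ j ∈ Finset.range c, (∏ k ∈ (Finset.range c).erase j, (α * n - k)) • (n : ℝ)) α := by
    apply HasDerivAt.fun_finsetProd
    intro j _
    simpa using ((hasDerivAt_id α).mul_const (n : ℝ)).sub_const (j : ℝ)
  have hq : HasDerivAt (fun x : ℝ => x ^ c / (Nat.factorial c : ℝ))
      ((c : ℝ) * α ^ (c - 1) / (Nat.factorial c : ℝ)) α := (hasDerivAt_pow c α).div_const _
  have := hq.fun_mul hp
  rw [show Hmul n c = fun x : ℝ => x ^ c / (Nat.factorial c : ℝ) * ∏ j ∈ Finset.range c, (x * n - j) from rfl]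
  simpa [Hmul, Hder, smul_eq_mul, Finset.mul_sum, mul_comm, mul_assoc, mul_left_comm]
    using this

lemma fac_pos {n c M : ℕ} (hMn : c ≤ M) {α : ℝ} (hα : (M : ℝ) ≤ α * n) :
    ∀ j ∈ Finset.range c, (0 : ℝ) < α * n - j := by
  intro j hj
  have hj' : (j : ℝ) < c := by exact_mod_cast Finset.mem_range.mp hj
  have hcM : (c : ℝ) ≤ M := by exact_mod_cast hMn
  linarith

lemma Hmul_lt {n c M : ℕ} (hc : 1 ≤ c) (hcM : c ≤ M) {x y : ℝ}
    (hx : 0 < x) (hxM : (M : ℝ) ≤ x * n) (hxy : x < y) :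
    Hmul n c x < Hmul n c y := by
  have hyM : (M : ℝ) ≤ y * n := by
    have : x * n ≤ y * n := by
      have : (0:ℝ) ≤ n := Nat.cast_nonneg n
      nlinarith
    linarith
  have hfx := fac_pos hcM hxM
  have hPx : 0 < ∏ j ∈ Finset.range c, (x * n - j) := Finset.prod_pos hfx
  have hP : ∏ j ∈ Finset.range c, (x * n - j) ≤ ∏ j ∈ Finset.range c, (y * n - j) := by
    apply Finset.prod_le_prod (fun j hj => le_of_lt (hfx j hj))
    intro j hj
    have : (0:ℝ) ≤ n := Nat.cast_nonneg n
    nlinarith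
  have hpow : x ^ c < y ^ c := pow_lt_pow_left₀ hxy (le_of_lt hx) (by omega)
  have hfactpos : (0:ℝ) < (Nat.factorial c : ℝ) := by
    exact_mod_cast Nat.factorial_pos c
  have h1 : x ^ c / (Nat.factorial c : ℝ) < y ^ c / (Nat.factorial c : ℝ) := by gcongr
  have hy : 0 < y := lt_trans hx hxy
  have h2 : (0:ℝ) ≤ y ^ c / (Nat.factorial c : ℝ) := by positivity
  exact mul_lt_mul h1 hP hPx h2

lemma Hder_pos {n c M : ℕ} (hn : 1 ≤ n) (hc : 1 ≤ c) (hcM : c ≤ M) {α : ℝ}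
    (hα : 0 < α) (hαM : (M : ℝ) ≤ α * n) : 0 < Hder n c α := by
  have hfa := fac_pos (n := n) hcM hαM
  have hP : 0 < ∏ j ∈ Finset.range c, (α * n - j) := Finset.prod_pos hfa
  have hfactpos : (0:ℝ) < (Nat.factorial c : ℝ) := by exact_mod_cast Nat.factorial_pos c
  have hc' : (0:ℝ) < c := by exact_mod_cast hc
  have h1 : 0 < (c : ℝ) * α ^ (c - 1) / (Nat.factorial c : ℝ) *
      ∏ j ∈ Finset.range c, (α * n - j) := by positivity
  have h2 : 0 ≤ α ^ c / (Nat.factorial c : ℝ) *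
      ∑ j ∈ Finset.range c, (∏ k ∈ (Finset.range c).erase j, (α * n - k)) * n := by
    apply mul_nonneg (by positivity)
    apply Finset.sum_nonneg
    intro j hj
    apply mul_nonneg _ (Nat.cast_nonneg n)
    apply Finset.prod_nonneg
    intro k hk
    exact le_of_lt (hfa k (Finset.mem_of_mem_erase hk))
  unfold Hder
  linarith

/-- Derivative of `Menv`. -/
noncomputable def Mder (n M : ℕ) (B₀ β : ℝ) (ζ : ℕ → ℝ) (α : ℝ) : ℝ :=
  B₀ * (n : ℝ) ^ (-(2 * β)) * (-(2 * β) * α ^ (-(2 * β) - 1))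
  + ∑ c ∈ Finset.Icc 1 M, ζ c * Hder n c α

lemma hasDerivAt_Menv (n M : ℕ) (B₀ β : ℝ) (ζ : ℕ → ℝ) {α : ℝ} (hα : α ≠ 0) :
    HasDerivAt (Menv n M B₀ β ζ) (Mder n M B₀ β ζ α) α := by
  have h1 : HasDerivAt (fun x : ℝ => B₀ * (n : ℝ) ^ (-(2 * β)) * x ^ (-(2 * β)))
      (B₀ * (n : ℝ) ^ (-(2 * β)) * (-(2 * β) * α ^ (-(2 * β) - 1))) α :=
    (Real.hasDerivAt_rpow_const (Or.inl hα)).const_mul _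
  have h2 : HasDerivAt (fun x : ℝ => ∑ c ∈ Finset.Icc 1 M, ζ c * Hmul n c x)
      (∑ c ∈ Finset.Icc 1 M, ζ c * Hder n c α) α := by
    apply HasDerivAt.fun_sum
    intro c _
    exact (hasDerivAt_Hmul n c α).const_mul (ζ c)
  exact h1.add h2

/-- **Strict Monotonicity for Interior Solutions.**
Under the setting of the Structural Shift theorem, if the nonnegative spectrum `ζ⁽²⁾`
dominates `ζ⁽¹⁾` in the high-order sense, `α*₁`, `α*₂` are minimizers of `𝓜(·; ζ⁽¹⁾)`,
`𝓜(·; ζ⁽²⁾)` over `[M/n, 1]`, and both minimizers lie in the open interval `(M/n, 1)`,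
then the inequality is strict: `α*₂ < α*₁`. -/
theorem strict_monotonicity_interior_solutions (n M : ℕ)
    (hn : 1 ≤ n) (hM : 1 ≤ M) (hMn : M ≤ n)
    (B₀ β : ℝ) (hB₀ : 0 < B₀) (hβ : 0 < β)
    (ζ₁ ζ₂ : ℕ → ℝ) (hζ₁ : ∀ c, 0 ≤ ζ₁ c) (hζ₂ : ∀ c, 0 ≤ ζ₂ c)
    (cstar : ℕ)
    (hlow : ∀ c, 1 ≤ c → c ≤ M → c < cstar → ζ₂ c = ζ₁ c)
    (hhigh : ∀ c, 1 ≤ c → c ≤ M → cstar ≤ c → ζ₁ c ≤ ζ₂ c)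
    (hstrict : ∃ c, 1 ≤ c ∧ c ≤ M ∧ cstar ≤ c ∧ ζ₁ c < ζ₂ c)
    (α₁ α₂ : ℝ)
    (hα₁mem : α₁ ∈ Set.Icc ((M : ℝ) / n) 1)
    (hα₂mem : α₂ ∈ Set.Icc ((M : ℝ) / n) 1)
    (hα₁min : ∀ α ∈ Set.Icc ((M : ℝ) / n) 1, Menv n M B₀ β ζ₁ α₁ ≤ Menv n M B₀ β ζ₁ α)
    (hα₂min : ∀ α ∈ Set.Icc ((M : ℝ) / n) 1, Menv n M B₀ β ζ₂ α₂ ≤ Menv n M B₀ β ζ₂ α)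
    (hα₁int : α₁ ∈ Set.Ioo ((M : ℝ) / n) 1)
    (hα₂int : α₂ ∈ Set.Ioo ((M : ℝ) / n) 1) :
    α₂ < α₁ := by
  have hn' : (0:ℝ) < n := by exact_mod_cast hn
  -- nonnegativity of the spectral gap
  have hd : ∀ c ∈ Finset.Icc 1 M, 0 ≤ ζ₂ c - ζ₁ c := by
    intro c hc
    obtain ⟨hc1, hcM⟩ := Finset.mem_Icc.mp hc
    rcases lt_or_ge c cstar with h | h
    · rw [hlow c hc1 hcM h]; simp
    · linarith [hhigh c hc1 hcM h]
  obtain ⟨c₀, hc₀1, hc₀M, hc₀star, hc₀lt⟩ := hstrict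
  have hc₀mem : c₀ ∈ Finset.Icc 1 M := Finset.mem_Icc.mpr ⟨hc₀1, hc₀M⟩
  -- step 1 : α₂ ≤ α₁
  have hle : α₂ ≤ α₁ := by
    by_contra h
    push_neg at h   -- h : α₁ < α₂
    have hx : 0 < α₁ := lt_of_lt_of_le (by positivity) hα₁mem.1
    have hxM : (M : ℝ) ≤ α₁ * n := (div_le_iff₀ hn').mp hα₁mem.1
    have key : ∑ c ∈ Finset.Icc 1 M, (ζ₂ c - ζ₁ c) * Hmul n c α₁
        < ∑ c ∈ Finset.Icc 1 M, (ζ₂ c - ζ₁ c) * Hmul n c α₂ := by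
      apply Finset.sum_lt_sum
      · intro c hc
        obtain ⟨hc1, hcM⟩ := Finset.mem_Icc.mp hc
        exact mul_le_mul_of_nonneg_left (le_of_lt (Hmul_lt hc1 hcM hx hxM h)) (hd c hc)
      · exact ⟨c₀, hc₀mem, by
          have := Hmul_lt (n := n) hc₀1 hc₀M hx hxM h
          nlinarith⟩
    have A := hα₁min α₂ hα₂mem
    have B := hα₂min α₁ hα₁mem
    simp only [Menv] at A B
    have expand : ∀ α : ℝ, ∑ c ∈ Finset.Icc 1 M, (ζ₂ c - ζ₁ c) * Hmul n c α
        = (∑ c ∈ Finset.Icc 1 M, ζ₂ c * Hmul n c α)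
          - ∑ c ∈ Finset.Icc 1 M, ζ₁ c * Hmul n c α := by
      intro α
      rw [← Finset.sum_sub_distrib]
      congr 1; funext c; ring
    rw [expand, expand] at key
    linarith
  -- step 2 : α₂ ≠ α₁
  rcases lt_or_eq_of_le hle with h | h
  · exact h
  · exfalso
    subst h
    have hα : α₂ ≠ 0 := by
      have : 0 < α₂ := lt_of_lt_of_le (by positivity) hα₂mem.1
      linarith
    have hIoo : Set.Ioo ((M : ℝ) / n) 1 ∈ nhds α₂ := Ioo_mem_nhds hα₂int.1 hα₂int.2
    have hmin1 : IsLocalMin (Menv n M B₀ β ζ₁) α₂ :=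
      Filter.eventually_of_mem hIoo fun x hx => hα₁min x (Set.Ioo_subset_Icc_self hx)
    have hmin2 : IsLocalMin (Menv n M B₀ β ζ₂) α₂ :=
      Filter.eventually_of_mem hIoo fun x hx => hα₂min x (Set.Ioo_subset_Icc_self hx)
    have z1 : Mder n M B₀ β ζ₁ α₂ = 0 :=
      hmin1.hasDerivAt_eq_zero (hasDerivAt_Menv n M B₀ β ζ₁ hα)
    have z2 : Mder n M B₀ β ζ₂ α₂ = 0 :=
      hmin2.hasDerivAt_eq_zero (hasDerivAt_Menv n M B₀ β ζ₂ hα)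
    have hx : 0 < α₂ := lt_of_lt_of_le (by positivity) hα₂mem.1
    have hxM : (M : ℝ) ≤ α₂ * n := (div_le_iff₀ hn').mp hα₂mem.1
    have key : (0:ℝ) < ∑ c ∈ Finset.Icc 1 M, (ζ₂ c - ζ₁ c) * Hder n c α₂ := by
      apply Finset.sum_pos'
      · intro c hc
        obtain ⟨hc1, hcM⟩ := Finset.mem_Icc.mp hc
        exact mul_nonneg (hd c hc) (le_of_lt (Hder_pos hn hc1 hcM hx hxM))
      · exact ⟨c₀, hc₀mem, mul_pos (by linarith) (Hder_pos hn hc₀1 hc₀M hx hxM)⟩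
    have expand : ∑ c ∈ Finset.Icc 1 M, (ζ₂ c - ζ₁ c) * Hder n c α₂
        = (∑ c ∈ Finset.Icc 1 M, ζ₂ c * Hder n c α₂)
          - ∑ c ∈ Finset.Icc 1 M, ζ₁ c * Hder n c α₂ := by
      rw [← Finset.sum_sub_distrib]
      congr 1; funext c; ring
    simp only [Mder] at z1 z2
    rw [expand] at key
    linarith
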